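/- Let z ∈ F_∞. Then the set of FPF-visible inversions of z is exactly Inv(β_min(z)), the set of inversions of the lexicographically minimal minimal-length permutation β_min(z) conjugating Θ to z. -/

import Mathlib

open Equiv

noncomputable section

/-- The function underlying the permutation `Θ : i ↦ i - (-1)^i` of `ℤ`. -/
def thetaFun (i : ℤ) : ℤ := if Even i then i - 1 else i + 1

theorem thetaFun_invol : Function.Involutive thetaFun := by
  intro i
  unfold thetaFun
  by_cases h : Even i
  · have h1 : ¬ Even (i - 1) := by simp [Int.even_sub_one, h]
    simp [h, h1]
  · have h1 : Even (i + 1) := Int.even_add_one.mpr h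
    simp [h, h1]

/-- The permutation `Θ` of `ℤ`, interchanging `2k-1` and `2k` for every integer `k`. -/
def Theta : Equiv.Perm ℤ := thetaFun_invol.toPerm

/-- `F_ℤ`: the fixed-point-free involutions of `ℤ` agreeing with `Θ` outside a finite set. -/
def FZ : Set (Equiv.Perm ℤ) :=
  {z | z * z = 1 ∧ (∀ i : ℤ, z i ≠ i) ∧ {i : ℤ | z i ≠ Theta i}.Finite}

/-- The set of inversions `Inv(w) = {(i,j) : i < j, w(i) > w(j)}`. -/
def InvSet (w : Equiv.Perm ℤ) : Set (ℤ × ℤ) := {p | p.1 < p.2 ∧ w p.2 < w p.1}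

/-- `Cyc_ℤ(w) = {(i,j) : i < j, w(i) = j}`. -/
def CycSet (w : Equiv.Perm ℤ) : Set (ℤ × ℤ) := {p | p.1 < p.2 ∧ w p.1 = p.2}

/-- `ℓ̂_FPF(w) = |Inv(w) ∖ Cyc_ℤ(w)| / 2`. -/
def fpfLen (w : Equiv.Perm ℤ) : ℕ := ((InvSet w) \ (CycSet w)).ncard / 2

/-- `(i,j)` is an FPF-visible inversion of `z`: `i < j` and `z(j) < min{i, z(i)}`. -/
def FpfVisInv (z : Equiv.Perm ℤ) (i j : ℤ) : Prop := i < j ∧ z j < min i (z i)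

/-- `i` is an FPF-visible descent of `z`. -/
def FpfVisDes (z : Equiv.Perm ℤ) (i : ℤ) : Prop := FpfVisInv z i (i + 1)

/-- `i` is a visible descent of an involution `f` of `ℤ`: `f(i+1) ≤ min{i, f(i)}`. -/
def VisDes (f : ℤ → ℤ) (i : ℤ) : Prop := f (i + 1) ≤ min i (f i)

/-- `(q,r)` is the lexicographically maximal FPF-visible inversion of `z`. -/
def IsMaxVisInv (z : Equiv.Perm ℤ) (q r : ℤ) : Prop :=
  FpfVisInv z q r ∧ ∀ a b : ℤ, FpfVisInv z a b → a < q ∨ (a = q ∧ b ≤ r)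

/-- `S_∞`: permutations of `ℤ` whose support is a finite set of positive integers. -/
def SInf : Set (Equiv.Perm ℤ) := {w | {i : ℤ | w i ≠ i}.Finite ∧ ∀ i : ℤ, w i ≠ i → 0 < i}

/-- The Coxeter length of `w ∈ S_∞`: the number of inversions. -/
def lenZ (w : Equiv.Perm ℤ) : ℕ := (InvSet w).ncard

/-- `F_∞`: the elements of `F_ℤ` agreeing with `Θ` on all `i ≤ 0`. -/
def FInf : Set (Equiv.Perm ℤ) := {z | z ∈ FZ ∧ ∀ i : ℤ, i ≤ 0 → z i = Theta i}

/-- `A_FPF(z)`: the elements `w ∈ S_∞` of minimal Coxeter length with `z = w⁻¹ Θ w`. -/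
def AFPF (z : Equiv.Perm ℤ) : Set (Equiv.Perm ℤ) :=
  {w | w ∈ SInf ∧ z = w⁻¹ * Theta * w ∧
    ∀ v ∈ SInf, z = v⁻¹ * Theta * v → lenZ w ≤ lenZ v}

/-- `w = β_min(z)`: `w ∈ A_FPF(z)` and the one-line sequence `(w(1), w(2), …)` of `w`
is lexicographically minimal among elements of `A_FPF(z)`. -/
def IsLexMinAtom (z w : Equiv.Perm ℤ) : Prop :=
  w ∈ AFPF z ∧ ∀ v ∈ AFPF z, v = w ∨
    ∃ k : ℤ, 0 < k ∧ w k < v k ∧ ∀ j : ℤ, 0 < j → j < k → w j = v j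

namespace FpfVisAux

/-! ### Theta basics -/

lemma theta_apply (i : ℤ) : Theta i = if Even i then i - 1 else i + 1 := rfl

lemma theta_val_even {i : ℤ} (h : i % 2 = 0) : Theta i = i - 1 := by
  rw [theta_apply, if_pos (Int.even_iff.mpr h)]

lemma theta_val_odd {i : ℤ} (h : i % 2 = 1) : Theta i = i + 1 := by
  rw [theta_apply, if_neg (fun he => by rw [Int.even_iff] at he; omega)]

lemma theta_invol (i : ℤ) : Theta (Theta i) = i := thetaFun_invol i

lemma theta_cases (i : ℤ) :
    (i % 2 = 0 ∧ Theta i = i - 1) ∨ (i % 2 = 1 ∧ Theta i = i + 1) := by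
  rcases Int.emod_two_eq_zero_or_one i with h | h
  · exact Or.inl ⟨h, theta_val_even h⟩
  · exact Or.inr ⟨h, theta_val_odd h⟩

/-! ### Basic facts about z ∈ FInf -/

variable {z : Equiv.Perm ℤ}

lemma z_invol (hz : z ∈ FInf) (x : ℤ) : z (z x) = x := by
  have h := hz.1.1
  have : (z * z) x = (1 : Equiv.Perm ℤ) x := by rw [h]
  simpa [Equiv.Perm.mul_apply] using this

lemma z_fix (hz : z ∈ FInf) (x : ℤ) : z x ≠ x := hz.1.2.1 x

lemma z_neg (hz : z ∈ FInf) {x : ℤ} (h : x ≤ 0) : z x = Theta x := hz.2 x h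

lemma z_pos (hz : z ∈ FInf) {x : ℤ} (hx : 1 ≤ x) : 1 ≤ z x := by
  by_contra h
  push_neg at h
  have h0 : z x ≤ 0 := by omega
  have h1 : z (z x) = Theta (z x) := z_neg hz h0
  rw [z_invol hz] at h1
  rcases theta_cases (z x) with ⟨_, h2⟩ | ⟨_, h2⟩ <;> omega

lemma z_inj (hz : z ∈ FInf) {x y : ℤ} (h : z x = z y) : x = y := z.injective h

lemma exists_bound (hz : z ∈ FInf) :
    ∃ N : ℤ, N % 2 = 0 ∧ 2 ≤ N ∧ ∀ i, N < i → z i = Theta i := by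
  obtain ⟨B, hB⟩ := hz.1.2.2.bddAbove
  refine ⟨2 * max B 1 + 2, by omega, ?_, ?_⟩
  · have := le_max_right B 1; omega
  · intro i hi
    by_contra h
    have hmem : i ∈ {i : ℤ | z i ≠ Theta i} := h
    have h1 := hB hmem
    have h2 := le_max_left B 1
    omega

lemma z_bounded (hz : z ∈ FInf) {N : ℤ} (hN1 : N % 2 = 0)
    (hN3 : ∀ i, N < i → z i = Theta i) {x : ℤ} (h1 : 1 ≤ x) (h2 : x ≤ N) : z x ≤ N := by
  by_contra h
  push_neg at h
  have h3 : z (z x) = Theta (z x) := hN3 _ h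
  rw [z_invol hz] at h3
  rcases theta_cases (z x) with ⟨hp, h4⟩ | ⟨hp, h4⟩ <;> omega

/-! ### The rank function -/

def rnkSet (z : Equiv.Perm ℤ) (i : ℤ) : Set ℤ := {x : ℤ | 1 ≤ x ∧ x ≤ i ∧ x < z x}

lemma rnkSet_finite (z : Equiv.Perm ℤ) (i : ℤ) : (rnkSet z i).Finite :=
  (Set.finite_Icc 1 i).subset (fun x hx => ⟨hx.1, hx.2.1⟩)

def rnk (z : Equiv.Perm ℤ) (i : ℤ) : ℕ := (rnkSet z i).ncard

lemma rnk_mono (z : Equiv.Perm ℤ) {i j : ℤ} (h : i ≤ j) : rnk z i ≤ rnk z j :=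
  Set.ncard_le_ncard (fun x hx => ⟨hx.1, hx.2.1.trans h, hx.2.2⟩) (rnkSet_finite z j)

lemma rnk_pos (z : Equiv.Perm ℤ) {a : ℤ} (h1 : 1 ≤ a) (h2 : a < z a) : 1 ≤ rnk z a :=
  (Set.ncard_pos (rnkSet_finite z a)).mpr ⟨a, ⟨h1, le_refl a, h2⟩⟩

lemma rnk_strict (z : Equiv.Perm ℤ) {a b : ℤ} (ha1 : 1 ≤ a) (hb2 : b < z b)
    (hab : a < b) : rnk z a < rnk z b := by
  have hsub : insert b (rnkSet z a) ⊆ rnkSet z b := by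
    rintro x (rfl | ⟨h1, h2, h3⟩)
    · exact ⟨by omega, le_refl _, hb2⟩
    · exact ⟨h1, by omega, h3⟩
  have hnm : b ∉ rnkSet z a := fun hmem => absurd hmem.2.1 (by omega)
  have h1 : rnk z a + 1 ≤ rnk z b := by
    rw [rnk, rnk, ← Set.ncard_insert_of_notMem hnm (rnkSet_finite z a)]
    exact Set.ncard_le_ncard hsub (rnkSet_finite z b)
  omega

lemma rnk_lt_iff (z : Equiv.Perm ℤ) {a b : ℤ} (ha1 : 1 ≤ a) (ha2 : a < z a)
    (hb1 : 1 ≤ b) (hb2 : b < z b) : rnk z a < rnk z b ↔ a < b := by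
  constructor
  · intro h
    by_contra hab
    push_neg at hab
    exact absurd (rnk_mono z hab) (by omega)
  · exact rnk_strict z ha1 hb2

lemma rnk_inj (z : Equiv.Perm ℤ) {a b : ℤ} (ha1 : 1 ≤ a) (ha2 : a < z a)
    (hb1 : 1 ≤ b) (hb2 : b < z b) (h : rnk z a = rnk z b) : a = b := by
  rcases lt_trichotomy a b with hc | hc | hc
  · exact absurd (rnk_strict z ha1 hb2 hc) (by omega)
  · exact hc
  · exact absurd (rnk_strict z hb1 ha2 hc) (by omega)

lemma exists_rnk_eq (z : Equiv.Perm ℤ) {a₀ : ℤ} {s : ℕ} (h1 : 1 ≤ a₀) (h2 : a₀ < z a₀)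
    (hs1 : 1 ≤ s) (hs2 : s ≤ rnk z a₀) :
    ∃ a : ℤ, 1 ≤ a ∧ a < z a ∧ a ≤ a₀ ∧ rnk z a = s := by
  have hinj : Set.InjOn (rnk z) (rnkSet z a₀) := by
    intro x hx y hy hxy
    exact rnk_inj z hx.1 hx.2.2 hy.1 hy.2.2 hxy
  have himg : (rnk z) '' (rnkSet z a₀) ⊆ Set.Icc 1 (rnk z a₀) := by
    rintro n ⟨x, hx, rfl⟩
    exact ⟨rnk_pos z hx.1 hx.2.2, rnk_mono z hx.2.1⟩
  have hIcc : (Set.Icc 1 (rnk z a₀)).ncard = rnk z a₀ := by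
    rw [← Finset.coe_Icc, Set.ncard_coe_finset, Nat.card_Icc]; omega
  have hcard : (Set.Icc 1 (rnk z a₀)).ncard ≤ ((rnk z) '' (rnkSet z a₀)).ncard := by
    rw [Set.ncard_image_of_injOn hinj, hIcc]; exact le_refl _
  have heq := Set.eq_of_subset_of_ncard_le himg hcard (Set.finite_Icc _ _)
  have hmem : s ∈ (rnk z) '' (rnkSet z a₀) := by rw [heq]; exact ⟨hs1, hs2⟩
  obtain ⟨a, ⟨q1, q2, q3⟩, q4⟩ := hmem
  exact ⟨a, q1, q3, q2, q4⟩

lemma rnk_succ_mem (z : Equiv.Perm ℤ) {i : ℤ} (h1 : 1 ≤ i) (hm : i < z i) :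
    rnk z i = rnk z (i - 1) + 1 := by
  have hset : rnkSet z i = insert i (rnkSet z (i - 1)) := by
    ext x
    simp only [rnkSet, Set.mem_setOf_eq, Set.mem_insert_iff]
    constructor
    · rintro ⟨a, b, c⟩
      by_cases hxi : x = i
      · exact Or.inl hxi
      · exact Or.inr ⟨a, by omega, c⟩
    · rintro (rfl | ⟨a, b, c⟩)
      · exact ⟨h1, le_refl _, hm⟩
      · exact ⟨a, by omega, c⟩
  have hnm : i ∉ rnkSet z (i - 1) := fun hmem => absurd hmem.2.1 (by omega)
  rw [rnk, hset, Set.ncard_insert_of_notMem hnm (rnkSet_finite z (i - 1))]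
  rfl

lemma rnk_succ_not (z : Equiv.Perm ℤ) {i : ℤ} (hm : ¬(1 ≤ i ∧ i < z i)) :
    rnk z i = rnk z (i - 1) := by
  have hset : rnkSet z i = rnkSet z (i - 1) := by
    ext x
    simp only [rnkSet, Set.mem_setOf_eq]
    constructor
    · rintro ⟨a, b, c⟩
      refine ⟨a, ?_, c⟩
      rcases eq_or_lt_of_le b with rfl | hlt
      · exact absurd ⟨a, c⟩ hm
      · omega
    · rintro ⟨a, b, c⟩
      exact ⟨a, by omega, c⟩
  rw [rnk, hset]; rfl

end FpfVisAux
namespace FpfVisAux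

variable {z : Equiv.Perm ℤ}

/-! ### Counting: pairing on an even invariant interval -/

lemma rnk_even_bound (hz : z ∈ FInf) {N : ℤ} (hN1 : N % 2 = 0) (hN2 : 2 ≤ N)
    (hN3 : ∀ i, N < i → z i = Theta i) : 2 * (rnk z N : ℤ) = N := by
  set M1 : Set ℤ := rnkSet z N with hM1
  set M2 : Set ℤ := {x : ℤ | 1 ≤ x ∧ x ≤ N ∧ z x < x} with hM2
  have hM2fin : M2.Finite := (Set.finite_Icc 1 N).subset (fun x hx => ⟨hx.1, hx.2.1⟩)
  have himg : z '' M1 = M2 := by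
    ext y
    constructor
    · rintro ⟨x, ⟨h1, h2, h3⟩, rfl⟩
      refine ⟨by omega, z_bounded hz hN1 hN3 h1 h2, ?_⟩
      rw [z_invol hz]; exact h3
    · rintro ⟨h1, h2, h3⟩
      refine ⟨z y, ⟨z_pos hz h1, z_bounded hz hN1 hN3 h1 h2, ?_⟩, z_invol hz y⟩
      rw [z_invol hz]; exact h3
  have hdisj : Disjoint M1 M2 := by
    rw [Set.disjoint_left]
    rintro x ⟨_, _, h3⟩ ⟨_, _, h6⟩
    omega
  have hunion : M1 ∪ M2 = Set.Icc 1 N := by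
    ext x
    simp only [hM1, hM2, rnkSet, Set.mem_union, Set.mem_setOf_eq, Set.mem_Icc]
    constructor
    · rintro (⟨a, b, _⟩ | ⟨a, b, _⟩) <;> exact ⟨a, b⟩
    · rintro ⟨a, b⟩
      have := z_fix hz x
      rcases lt_trichotomy x (z x) with h | h | h
      · exact Or.inl ⟨a, b, h⟩
      · exact absurd h.symm this
      · exact Or.inr ⟨a, b, h⟩
  have hcard2 : M2.ncard = M1.ncard := by
    rw [← himg, Set.ncard_image_of_injOn (z.injective.injOn)]
  have hIcc : (Set.Icc (1:ℤ) N).ncard = N.toNat := by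
    rw [← Finset.coe_Icc, Set.ncard_coe_finset, Int.card_Icc]
    congr 1; omega
  have hsum : M1.ncard + M2.ncard = N.toNat := by
    rw [← Set.ncard_union_eq hdisj (rnkSet_finite z N) hM2fin, hunion, hIcc]
  have : (rnk z N : ℤ) = M1.ncard := rfl
  omega

lemma rnk_odd_large (hz : z ∈ FInf) {N : ℤ} (hN1 : N % 2 = 0) (hN2 : 2 ≤ N)
    (hN3 : ∀ i, N < i → z i = Theta i) :
    ∀ i : ℤ, N < i → i % 2 = 1 → 2 * (rnk z i : ℤ) = i + 1 := by
  have key : ∀ k : ℕ, 2 * (rnk z (N + 1 + 2 * (k : ℤ)) : ℤ) = N + 2 * (k : ℤ) + 2 := by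
    intro k
    induction k with
    | zero =>
      rw [show N + 1 + 2 * ((0:ℕ):ℤ) = N + 1 by norm_num]
      have hmem : (N + 1 : ℤ) < z (N + 1) := by
        rw [hN3 (N + 1) (by omega), theta_val_odd (by omega)]; omega
      have h := rnk_succ_mem z (i := N + 1) (by omega) hmem
      rw [show (N : ℤ) + 1 - 1 = N by ring] at h
      have h2 := rnk_even_bound hz hN1 hN2 hN3
      push_cast
      omega
    | succ k ih =>
      set x : ℤ := N + 1 + 2 * (k : ℤ) with hx
      have h1 : ¬ (1 ≤ x + 1 ∧ x + 1 < z (x + 1)) := by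
        rw [hN3 (x + 1) (by omega), theta_val_even (by omega)]
        omega
      have e1 : rnk z (x + 1) = rnk z x := by
        have := rnk_succ_not z h1
        rwa [show x + 1 - 1 = x by ring] at this
      have hmem : (x + 2 : ℤ) < z (x + 2) := by
        rw [hN3 (x + 2) (by omega), theta_val_odd (by omega)]; omega
      have e2 : rnk z (x + 2) = rnk z (x + 1) + 1 := by
        have := rnk_succ_mem z (i := x + 2) (by omega) hmem
        rwa [show x + 2 - 1 = x + 1 by ring] at this
      push_cast
      rw [show N + 1 + 2 * ((k:ℤ) + 1) = x + 2 by rw [hx]; ring]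
      omega
  intro i hi hodd
  obtain ⟨k, hk⟩ : ∃ k : ℕ, i = N + 1 + 2 * (k : ℤ) := by
    refine ⟨((i - N - 1) / 2).toNat, ?_⟩
    omega
  subst hk
  have := key k
  omega

/-! ### The explicit minimal atom β -/

def betaFun (z : Equiv.Perm ℤ) (i : ℤ) : ℤ :=
  if i ≤ 0 then i else if i < z i then 2 * (rnk z i : ℤ) - 1 else 2 * (rnk z (z i) : ℤ)

lemma beta_neg {i : ℤ} (h : i ≤ 0) : betaFun z i = i := by
  rw [betaFun, if_pos h]

lemma beta_A {i : ℤ} (h1 : 1 ≤ i) (h2 : i < z i) :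
    betaFun z i = 2 * (rnk z i : ℤ) - 1 := by
  rw [betaFun, if_neg (by omega), if_pos h2]

lemma beta_nA {i : ℤ} (h1 : 1 ≤ i) (h2 : z i < i) :
    betaFun z i = 2 * (rnk z (z i) : ℤ) := by
  rw [betaFun, if_neg (by omega), if_neg (by omega)]

lemma beta_pos (hz : z ∈ FInf) {i : ℤ} (h : 1 ≤ i) : 1 ≤ betaFun z i := by
  rcases lt_trichotomy i (z i) with hc | hc | hc
  · rw [beta_A h hc]
    have := rnk_pos z h hc
    omega
  · exact absurd hc.symm (z_fix hz i)
  · rw [beta_nA h hc]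
    have hz1 : 1 ≤ z i := z_pos hz h
    have hz2 : z i < z (z i) := by rw [z_invol hz]; exact hc
    have := rnk_pos z hz1 hz2
    omega

lemma beta_conj (hz : z ∈ FInf) (i : ℤ) : betaFun z (z i) = Theta (betaFun z i) := by
  by_cases hi : i ≤ 0
  · have h1 : z i = Theta i := z_neg hz hi
    have h2 : Theta i ≤ 0 := by
      rcases theta_cases i with ⟨hp, h⟩ | ⟨hp, h⟩ <;> omega
    rw [h1, beta_neg h2, beta_neg hi]
  · push_neg at hi
    have h1 : (1:ℤ) ≤ i := hi
    rcases lt_trichotomy i (z i) with hc | hc | hc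
    · have hzi1 : 1 ≤ z i := by omega
      have hzi2 : z (z i) < z i := by rw [z_invol hz]; exact hc
      rw [beta_nA hzi1 hzi2, z_invol hz, beta_A h1 hc,
        theta_val_odd (by omega)]
      try ring
    · exact absurd hc.symm (z_fix hz i)
    · have hzi1 : 1 ≤ z i := z_pos hz h1
      have hzi2 : z i < z (z i) := by rw [z_invol hz]; exact hc
      rw [beta_A hzi1 hzi2, beta_nA h1 hc, theta_val_even (by omega)]
      try ring

lemma beta_inj (hz : z ∈ FInf) : Function.Injective (betaFun z) := by
  intro x y h
  by_cases hx : x ≤ 0 <;> by_cases hy : y ≤ 0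
  · rwa [beta_neg hx, beta_neg hy] at h
  · push_neg at hy
    rw [beta_neg hx] at h
    have := beta_pos hz (show (1:ℤ) ≤ y by omega)
    omega
  · push_neg at hx
    rw [beta_neg hy] at h
    have := beta_pos hz (show (1:ℤ) ≤ x by omega)
    omega
  · push_neg at hx hy
    have hx1 : (1:ℤ) ≤ x := hx
    have hy1 : (1:ℤ) ≤ y := hy
    rcases lt_trichotomy x (z x) with hcx | hcx | hcx
    · rcases lt_trichotomy y (z y) with hcy | hcy | hcy
      · rw [beta_A hx1 hcx, beta_A hy1 hcy] at h
        exact rnk_inj z hx1 hcx hy1 hcy (by omega)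
      · exact absurd hcy.symm (z_fix hz y)
      · rw [beta_A hx1 hcx, beta_nA hy1 hcy] at h
        omega
    · exact absurd hcx.symm (z_fix hz x)
    · rcases lt_trichotomy y (z y) with hcy | hcy | hcy
      · rw [beta_nA hx1 hcx, beta_A hy1 hcy] at h
        omega
      · exact absurd hcy.symm (z_fix hz y)
      · rw [beta_nA hx1 hcx, beta_nA hy1 hcy] at h
        have hzx : 1 ≤ z x := z_pos hz hx1
        have hzy : 1 ≤ z y := z_pos hz hy1
        have hzx2 : z x < z (z x) := by rw [z_invol hz]; exact hcx
        have hzy2 : z y < z (z y) := by rw [z_invol hz]; exact hcy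
        have := rnk_inj z hzx hzx2 hzy hzy2 (by omega)
        have := congrArg z this
        rwa [z_invol hz, z_invol hz] at this

lemma exists_rnk_global (hz : z ∈ FInf) {N : ℤ} (hN1 : N % 2 = 0) (hN2 : 2 ≤ N)
    (hN3 : ∀ i, N < i → z i = Theta i) {s : ℕ} (hs : 1 ≤ s) :
    ∃ a : ℤ, 1 ≤ a ∧ a < z a ∧ rnk z a = s := by
  set a₀ : ℤ := N + 2 * (s : ℤ) - 1 with ha₀
  have h1 : (1:ℤ) ≤ a₀ := by omega
  have h2 : a₀ < z a₀ := by
    rw [hN3 a₀ (by omega), theta_val_odd (by omega)]; omega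
  have h3 := rnk_odd_large hz hN1 hN2 hN3 a₀ (by omega) (by omega)
  obtain ⟨a, q1, q2, _, q4⟩ := exists_rnk_eq z h1 h2 hs (by omega)
  exact ⟨a, q1, q2, q4⟩

lemma beta_surj (hz : z ∈ FInf) : Function.Surjective (betaFun z) := by
  obtain ⟨N, hN1, hN2, hN3⟩ := exists_bound hz
  intro y
  by_cases hy : y ≤ 0
  · exact ⟨y, beta_neg hy⟩
  · push_neg at hy
    obtain ⟨s, hs1, hsy⟩ : ∃ s : ℕ, 1 ≤ s ∧ (y = 2 * (s:ℤ) - 1 ∨ y = 2 * (s:ℤ)) :=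
      ⟨((y + 1) / 2).toNat, by omega, by omega⟩
    obtain ⟨a, q1, q2, q3⟩ := exists_rnk_global hz hN1 hN2 hN3 hs1
    rcases hsy with rfl | rfl
    · exact ⟨a, by rw [beta_A q1 q2, q3]⟩
    · refine ⟨z a, ?_⟩
      have hza1 : 1 ≤ z a := by omega
      have hza2 : z (z a) < z a := by rw [z_invol hz]; exact q2
      rw [beta_nA hza1 hza2, z_invol hz, q3]

/-- The explicit lexicographically-minimal atom, as a permutation. -/
def betaPerm (hz : z ∈ FInf) : Equiv.Perm ℤ :=
  Equiv.ofBijective (betaFun z) ⟨beta_inj hz, beta_surj hz⟩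

lemma betaPerm_apply (hz : z ∈ FInf) (i : ℤ) : betaPerm hz i = betaFun z i := rfl

lemma beta_large (hz : z ∈ FInf) {N : ℤ} (hN1 : N % 2 = 0) (hN2 : 2 ≤ N)
    (hN3 : ∀ i, N < i → z i = Theta i) {i : ℤ} (h : N < i) : betaFun z i = i := by
  rcases Int.emod_two_eq_zero_or_one i with hp | hp
  · have h1 : z i = i - 1 := by rw [hN3 i h, theta_val_even hp]
    have h2 : z i < i := by omega
    rw [beta_nA (by omega) h2, h1]
    have := rnk_odd_large hz hN1 hN2 hN3 (i - 1) (by omega) (by omega)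
    omega
  · have h1 : z i = i + 1 := by rw [hN3 i h, theta_val_odd hp]
    have h2 : i < z i := by omega
    rw [beta_A (by omega) h2]
    have := rnk_odd_large hz hN1 hN2 hN3 i h hp
    omega

lemma betaPerm_SInf (hz : z ∈ FInf) : betaPerm hz ∈ SInf := by
  obtain ⟨N, hN1, hN2, hN3⟩ := exists_bound hz
  constructor
  · apply (Set.finite_Icc 1 N).subset
    intro i hi
    simp only [Set.mem_setOf_eq, betaPerm_apply] at hi
    by_contra hmem
    rw [Set.mem_Icc] at hmem
    push_neg at hmem
    by_cases h : 1 ≤ i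
    · exact hi (beta_large hz hN1 hN2 hN3 (hmem h))
    · exact hi (beta_neg (by omega))
  · intro i hi
    simp only [Set.mem_setOf_eq, betaPerm_apply] at hi
    by_contra h
    exact hi (beta_neg (by omega))

lemma betaPerm_conj (hz : z ∈ FInf) : z = (betaPerm hz)⁻¹ * Theta * betaPerm hz := by
  ext x
  rw [Equiv.Perm.mul_apply, Equiv.Perm.mul_apply]
  rw [Equiv.Perm.eq_inv_iff_eq]
  exact beta_conj hz x

end FpfVisAux
namespace FpfVisAux

variable {z : Equiv.Perm ℤ}

/-! ### Visible inversions -/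

lemma vis_facts (hz : z ∈ FInf) {p q : ℤ} (h : FpfVisInv z p q) :
    1 ≤ p ∧ p < q ∧ 1 ≤ z q ∧ z q < p ∧ z q < z p := by
  obtain ⟨hpq, hmin⟩ := h
  rw [lt_min_iff] at hmin
  have hq : 1 ≤ q := by
    by_contra hq
    push_neg at hq
    have h1 : z q = Theta q := z_neg hz (by omega)
    rcases theta_cases q with ⟨_, h2⟩ | ⟨_, h2⟩ <;> omega
  have hzq : 1 ≤ z q := z_pos hz hq
  have hp : 1 ≤ p := by omega
  exact ⟨hp, hpq, hzq, hmin.1, hmin.2⟩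

lemma inv_iff_vis (hz : z ∈ FInf) {p q : ℤ} (hpq : p < q) :
    (betaFun z q < betaFun z p ↔ z q < min p (z p)) := by
  rw [lt_min_iff]
  by_cases hq0 : q ≤ 0
  · -- p < q ≤ 0 : both sides false
    rw [beta_neg hq0, beta_neg (show p ≤ 0 by omega)]
    have h1 : z q = Theta q := z_neg hz hq0
    constructor
    · intro h; omega
    · rintro ⟨h2, _⟩
      rcases theta_cases q with ⟨_, h3⟩ | ⟨_, h3⟩ <;> omega
  · push_neg at hq0
    have hq1 : (1:ℤ) ≤ q := hq0
    by_cases hp0 : p ≤ 0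
    · -- both sides false
      rw [beta_neg hp0]
      have h1 := beta_pos hz hq1
      have h2 := z_pos hz hq1
      constructor
      · intro h; omega
      · rintro ⟨h3, _⟩; omega
    · push_neg at hp0
      have hp1 : (1:ℤ) ≤ p := hp0
      rcases lt_trichotomy q (z q) with hcq | hcq | hcq
      · -- q ∈ A : both sides false
        rw [beta_A hq1 hcq]
        constructor
        · intro h
          exfalso
          rcases lt_trichotomy p (z p) with hcp | hcp | hcp
          · rw [beta_A hp1 hcp] at h
            have : rnk z q < rnk z p := by omega
            rw [rnk_lt_iff z hq1 hcq hp1 hcp] at this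
            omega
          · exact absurd hcp.symm (z_fix hz p)
          · rw [beta_nA hp1 hcp] at h
            have hzp1 : 1 ≤ z p := z_pos hz hp1
            have hzp2 : z p < z (z p) := by rw [z_invol hz]; exact hcp
            have : rnk z q ≤ rnk z (z p) := by omega
            have h2 : ¬ rnk z (z p) < rnk z q := by omega
            rw [rnk_lt_iff z hzp1 hzp2 hq1 hcq] at h2
            omega
        · rintro ⟨h1, _⟩; omega
      · exact absurd hcq.symm (z_fix hz q)
      · -- q ∉ A, m := z q ∈ A
        have hm1 : 1 ≤ z q := z_pos hz hq1
        have hm2 : z q < z (z q) := by rw [z_invol hz]; exact hcq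
        rw [beta_nA hq1 hcq]
        rcases lt_trichotomy p (z p) with hcp | hcp | hcp
        · -- p ∈ A
          rw [beta_A hp1 hcp]
          constructor
          · intro h
            have : rnk z (z q) < rnk z p := by omega
            rw [rnk_lt_iff z hm1 hm2 hp1 hcp] at this
            exact ⟨this, by omega⟩
          · rintro ⟨h1, _⟩
            have := (rnk_lt_iff z hm1 hm2 hp1 hcp).mpr h1
            omega
        · exact absurd hcp.symm (z_fix hz p)
        · -- p ∉ A
          have hmp1 : 1 ≤ z p := z_pos hz hp1
          have hmp2 : z p < z (z p) := by rw [z_invol hz]; exact hcp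
          rw [beta_nA hp1 hcp]
          constructor
          · intro h
            have : rnk z (z q) < rnk z (z p) := by omega
            rw [rnk_lt_iff z hm1 hm2 hmp1 hmp2] at this
            exact ⟨by omega, this⟩
          · rintro ⟨_, h2⟩
            have := (rnk_lt_iff z hm1 hm2 hmp1 hmp2).mpr h2
            omega

lemma invset_beta (hz : z ∈ FInf) :
    InvSet (betaPerm hz) = {p : ℤ × ℤ | FpfVisInv z p.1 p.2} := by
  ext ⟨p, q⟩
  simp only [InvSet, Set.mem_setOf_eq, FpfVisInv, betaPerm_apply]
  constructor
  · rintro ⟨h1, h2⟩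
    exact ⟨h1, (inv_iff_vis hz h1).mp h2⟩
  · rintro ⟨h1, h2⟩
    exact ⟨h1, (inv_iff_vis hz h1).mpr h2⟩

/-! ### S∞ generalities -/

lemma SInf_pos {v : Equiv.Perm ℤ} (hv : v ∈ SInf) {x : ℤ} (hx : 1 ≤ x) : 1 ≤ v x := by
  by_contra h
  push_neg at h
  have h1 : v (v x) = v x := by
    by_contra h2
    have := hv.2 (v x) h2
    omega
  have := v.injective h1
  omega

lemma SInf_neg_fix {v : Equiv.Perm ℤ} (hv : v ∈ SInf) {x : ℤ} (hx : x ≤ 0) : v x = x := by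
  by_contra h
  have := hv.2 x h
  omega

lemma invset_finite {v : Equiv.Perm ℤ} (hv : v ∈ SInf) : (InvSet v).Finite := by
  obtain ⟨B, hB⟩ := hv.1.bddAbove
  have key : InvSet v ⊆ Set.Icc 1 B ×ˢ Set.Icc 1 B := by
    rintro ⟨p, q⟩ ⟨h1', h2'⟩
    have h1 : p < q := h1'
    have h2 : v q < v p := h2'
    simp only [Set.mem_prod, Set.mem_Icc]
    have hmove : ∀ x : ℤ, v x ≠ x → x ≤ B ∧ v x ≤ B ∧ 0 < x ∧ 0 < v x := by
      intro x hx
      have m1 : x ∈ {i : ℤ | v i ≠ i} := hx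
      have m2 : v x ∈ {i : ℤ | v i ≠ i} := by
        simp only [Set.mem_setOf_eq]
        intro h
        exact hx (v.injective h)
      exact ⟨hB m1, hB m2, hv.2 x hx, hv.2 (v x) m2⟩
    have hp1 : 1 ≤ p := by
      by_contra h
      push_neg at h
      have hvp : v p = p := SInf_neg_fix hv (by omega)
      by_cases hq : v q = q
      · omega
      · have := hmove q hq
        omega
    have hqB : q ≤ B := by
      by_contra h
      push_neg at h
      have hvq : v q = q := by
        by_contra h2
        have := hmove q h2
        omega
      by_cases hp : v p = p
      · omega
      · have := hmove p hp
        omega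
    exact ⟨⟨hp1, by omega⟩, ⟨by omega, hqB⟩⟩
  exact ((Set.finite_Icc 1 B).prod (Set.finite_Icc 1 B)).subset key

lemma conj_iff {v : Equiv.Perm ℤ} :
    z = v⁻¹ * Theta * v ↔ ∀ x, v (z x) = Theta (v x) := by
  constructor
  · intro h x
    have h1 : z x = (v⁻¹ * Theta * v) x := by rw [← h]
    rw [Equiv.Perm.mul_apply, Equiv.Perm.mul_apply] at h1
    rw [h1]; exact Equiv.apply_symm_apply v _
  · intro h
    ext x
    rw [Equiv.Perm.mul_apply, Equiv.Perm.mul_apply, Equiv.Perm.eq_inv_iff_eq]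
    exact h x

/-! ### Step-down: shortening a non-normalized conjugator -/

lemma theta_swap_comm {m : ℤ} (hm : Theta m = m + 1) (y : ℤ) :
    Equiv.swap m (m + 1) (Theta y) = Theta (Equiv.swap m (m + 1) y) := by
  by_cases h1 : y = m
  · subst h1
    rw [hm, Equiv.swap_apply_right, Equiv.swap_apply_left, ← hm, theta_invol]
  · by_cases h2 : y = m + 1
    · subst h2
      rw [Equiv.swap_apply_right, hm, ← hm, theta_invol, Equiv.swap_apply_left]
    · have h3 : Theta y ≠ m + 1 := by
        rw [← hm]
        intro h
        exact h1 (by rw [← theta_invol y, h, theta_invol])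
      have h4 : Theta y ≠ m := by
        intro h
        apply h2
        rw [← theta_invol y, h, hm]
      rw [Equiv.swap_apply_of_ne_of_ne h4 h3, Equiv.swap_apply_of_ne_of_ne h1 h2]

lemma step_down (hz : z ∈ FInf) {v : Equiv.Perm ℤ} (hv1 : v ∈ SInf)
    (hv2 : ∀ x, v (z x) = Theta (v x)) {a : ℤ} (ha1 : 1 ≤ a) (ha2 : a < z a)
    (ha3 : v (z a) < v a) :
    ∃ u : Equiv.Perm ℤ, u ∈ SInf ∧ (∀ x, u (z x) = Theta (u x)) ∧ lenZ u + 1 = lenZ v := by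
  set b : ℤ := z a with hb
  set m : ℤ := v b with hmdef
  have hvb : v b = Theta (v a) := hv2 a
  have hva : v a = m + 1 := by
    rcases theta_cases (v a) with ⟨_, h⟩ | ⟨_, h⟩ <;> omega
  have hm_odd : Theta m = m + 1 := by
    have : m = v a - 1 := by omega
    rcases theta_cases m with ⟨hp, h⟩ | ⟨hp, h⟩
    · exfalso
      rcases theta_cases (v a) with ⟨hp2, h2⟩ | ⟨hp2, h2⟩ <;> omega
    · exact h
  set τ : Equiv.Perm ℤ := Equiv.swap m (m + 1) with hτ
  have hm1 : 1 ≤ m := by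
    rw [hmdef]
    exact SInf_pos hv1 (by omega)
  have hkey : ∀ x : ℤ, τ (v x) = if x = b then m + 1 else if x = a then m else v x := by
    intro x
    by_cases hxb : x = b
    · subst hxb
      rw [if_pos rfl, ← hmdef, Equiv.swap_apply_left]
    · rw [if_neg hxb]
      by_cases hxa : x = a
      · subst hxa
        rw [if_pos rfl, hva, Equiv.swap_apply_right]
      · rw [if_neg hxa]
        have h1 : v x ≠ m := fun h => hxb (v.injective (h.trans hmdef))
        have h2 : v x ≠ m + 1 := fun h => hxa (v.injective (h.trans hva.symm))
        exact Equiv.swap_apply_of_ne_of_ne h1 h2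
  refine ⟨τ * v, ?_, ?_, ?_⟩
  · constructor
    · apply (hv1.1.union ((Set.finite_singleton b).insert a)).subset
      intro x hx
      simp only [Set.mem_setOf_eq, Equiv.Perm.mul_apply] at hx
      simp only [Set.mem_union, Set.mem_setOf_eq, Set.mem_insert_iff, Set.mem_singleton_iff]
      by_cases h1 : v x = x
      · rw [h1] at hx
        right
        rcases (Equiv.swap_apply_ne_self_iff.mp hx).2 with h | h
        · right
          apply v.injective
          rw [h1, h, hmdef]
        · left
          apply v.injective
          rw [h1, h, hva]
      · exact Or.inl h1
    · intro x hx
      by_contra h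
      push_neg at h
      have h1 : v x = x := SInf_neg_fix hv1 h
      simp only [Equiv.Perm.mul_apply, h1] at hx
      have h2 : x ≠ m := by omega
      have h3 : x ≠ m + 1 := by omega
      exact hx (Equiv.swap_apply_of_ne_of_ne h2 h3)
  · intro x
    simp only [Equiv.Perm.mul_apply]
    rw [hv2 x]
    exact theta_swap_comm hm_odd (v x)
  · have hinv : InvSet (τ * v) = InvSet v \ {(a, b)} := by
      ext ⟨p, q⟩
      simp only [InvSet, Set.mem_setOf_eq, Set.mem_diff, Set.mem_singleton_iff,
        Equiv.Perm.mul_apply, Prod.mk.injEq, not_and]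
      have e1 : v p = m + 1 ↔ p = a :=
        ⟨fun h => v.injective (h.trans hva.symm), fun h => by rw [h, hva]⟩
      have e2 : v p = m ↔ p = b :=
        ⟨fun h => v.injective (h.trans hmdef), fun h => by rw [h, ← hmdef]⟩
      have e3 : v q = m + 1 ↔ q = a :=
        ⟨fun h => v.injective (h.trans hva.symm), fun h => by rw [h, hva]⟩
      have e4 : v q = m ↔ q = b :=
        ⟨fun h => v.injective (h.trans hmdef), fun h => by rw [h, ← hmdef]⟩
      rw [hkey p, hkey q]
      split_ifs <;> omega
    have hmem : (a, b) ∈ InvSet v := ⟨ha2, by rw [← hmdef, hva]; omega⟩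
    rw [lenZ, lenZ, hinv]
    exact Set.ncard_diff_singleton_add_one hmem (invset_finite hv1)

end FpfVisAux
namespace FpfVisAux

variable {z : Equiv.Perm ℤ}

lemma normalize (hz : z ∈ FInf) :
    ∀ (n : ℕ) (v : Equiv.Perm ℤ), v ∈ SInf → (∀ x, v (z x) = Theta (v x)) → lenZ v ≤ n →
    ∃ u : Equiv.Perm ℤ, u ∈ SInf ∧ (∀ x, u (z x) = Theta (u x)) ∧
      (∀ x, 1 ≤ x → x < z x → u x < u (z x)) ∧ lenZ u ≤ lenZ v := by
  intro n
  induction n with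
  | zero =>
    intro v hv1 hv2 hlen
    by_cases hnorm : ∀ x, 1 ≤ x → x < z x → v x < v (z x)
    · exact ⟨v, hv1, hv2, hnorm, le_refl _⟩
    · exfalso
      push_neg at hnorm
      obtain ⟨a, ha1, ha2, ha3⟩ := hnorm
      have hne : v (z a) ≠ v a := fun h => z_fix hz a (v.injective h)
      obtain ⟨u, _, _, hu3⟩ := step_down hz hv1 hv2 ha1 ha2 (by omega)
      omega
  | succ n ih =>
    intro v hv1 hv2 hlen
    by_cases hnorm : ∀ x, 1 ≤ x → x < z x → v x < v (z x)
    · exact ⟨v, hv1, hv2, hnorm, le_refl _⟩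
    · push_neg at hnorm
      obtain ⟨a, ha1, ha2, ha3⟩ := hnorm
      have hne : v (z a) ≠ v a := fun h => z_fix hz a (v.injective h)
      obtain ⟨u₀, hu1, hu2, hu3⟩ := step_down hz hv1 hv2 ha1 ha2 (by omega)
      obtain ⟨u, q1, q2, q3, q4⟩ := ih u₀ hu1 hu2 (by omega)
      exact ⟨u, q1, q2, q3, by omega⟩

lemma lower_bound (hz : z ∈ FInf) {u : Equiv.Perm ℤ} (hu1 : u ∈ SInf)
    (hu2 : ∀ x, u (z x) = Theta (u x)) (hu3 : ∀ x, 1 ≤ x → x < z x → u x < u (z x)) :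
    {p : ℤ × ℤ | FpfVisInv z p.1 p.2}.ncard ≤ lenZ u := by
  have hfin := invset_finite hu1
  have fact : ∀ p q : ℤ, (p, q) ∈ {p : ℤ × ℤ | FpfVisInv z p.1 p.2} →
      u q = u (z q) + 1 ∧ z q < p ∧ p < q ∧ 1 ≤ z q := by
    intro p q hpr
    have hpr' : FpfVisInv z p q := hpr
    obtain ⟨f1, f2, f3, f4, f5⟩ := vis_facts hz hpr'
    have hmlt : z q < z (z q) := by rw [z_invol hz]; omega
    have hlt := hu3 (z q) f3 hmlt
    have heq := hu2 (z q)
    rw [z_invol hz] at hlt heq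
    rcases theta_cases (u (z q)) with ⟨_, hth⟩ | ⟨_, hth⟩ <;>
      exact ⟨by omega, f4, f2, f3⟩
  apply Set.ncard_le_ncard_of_injOn
    (fun pr => if u pr.2 < u pr.1 then pr else (z pr.2, pr.1)) ?_ ?_ hfin
  · rintro ⟨p, q⟩ hpr
    obtain ⟨g1, g2, g3, g4⟩ := fact p q hpr
    dsimp only
    by_cases hc : u q < u p
    · rw [if_pos hc]
      exact ⟨g3, hc⟩
    · rw [if_neg hc]
      have n1 : u p ≠ u q := fun h => absurd (u.injective h) (by omega)
      have n2 : u p ≠ u (z q) := fun h => absurd (u.injective h) (by omega)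
      have hfin2 : u p < u (z q) := by omega
      exact ⟨g2, hfin2⟩
  · rintro ⟨p, q⟩ h1 ⟨p', q'⟩ h2 heq
    obtain ⟨g1, g2, g3, g4⟩ := fact p q h1
    obtain ⟨g1', g2', g3', g4'⟩ := fact p' q' h2
    have hv1 : FpfVisInv z p q := h1
    have hv2' : FpfVisInv z p' q' := h2
    obtain ⟨f1, f2, f3, f4, f5⟩ := vis_facts hz hv1
    obtain ⟨f1', f2', f3', f4', f5'⟩ := vis_facts hz hv2'
    dsimp only at heq
    by_cases hc1 : u q < u p <;> by_cases hc2 : u q' < u p'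
    · rwa [if_pos hc1, if_pos hc2] at heq
    · rw [if_pos hc1, if_neg hc2] at heq
      exfalso
      rw [Prod.mk.injEq] at heq
      obtain ⟨hA, hB⟩ := heq
      rw [← hB] at f5'
      omega
    · rw [if_neg hc1, if_pos hc2] at heq
      exfalso
      rw [Prod.mk.injEq] at heq
      obtain ⟨hA, hB⟩ := heq
      rw [hB] at f5
      omega
    · rw [if_neg hc1, if_neg hc2] at heq
      rw [Prod.mk.injEq] at heq ⊢
      obtain ⟨hA, hB⟩ := heq
      exact ⟨hB, z.injective hA⟩

lemma beta_AFPF (hz : z ∈ FInf) : betaPerm hz ∈ AFPF z := by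
  refine ⟨betaPerm_SInf hz, betaPerm_conj hz, ?_⟩
  intro v hv hconj
  obtain ⟨u, hu1, hu2, hu3, hu4⟩ :=
    normalize hz (lenZ v) v hv (conj_iff.mp hconj) (le_refl _)
  have h1 : lenZ (betaPerm hz) = {p : ℤ × ℤ | FpfVisInv z p.1 p.2}.ncard := by
    rw [lenZ, invset_beta hz]
  have h2 := lower_bound hz hu1 hu2 hu3
  omega

lemma atom_normalized (hz : z ∈ FInf) {w : Equiv.Perm ℤ} (hw : w ∈ AFPF z) :
    ∀ x, 1 ≤ x → x < z x → w x < w (z x) := by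
  by_contra h
  push_neg at h
  obtain ⟨a, ha1, ha2, ha3⟩ := h
  have hne : w (z a) ≠ w a := fun h => z_fix hz a (w.injective h)
  obtain ⟨u, hu1, hu2, hu3⟩ := step_down hz hw.1 (conj_iff.mp hw.2.1) ha1 ha2 (by omega)
  have := hw.2.2 u hu1 (conj_iff.mpr hu2)
  omega

lemma beta_lexlow (hz : z ∈ FInf) {v : Equiv.Perm ℤ} (hv1 : v ∈ SInf)
    (hv2 : ∀ x, v (z x) = Theta (v x)) (hv3 : ∀ x, 1 ≤ x → x < z x → v x < v (z x))
    {k : ℤ} (hk : 0 < k) (hag : ∀ j, 0 < j → j < k → v j = betaFun z j)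
    (hne : v k ≠ betaFun z k) : betaFun z k < v k := by
  have hk1 : (1:ℤ) ≤ k := hk
  rcases lt_trichotomy k (z k) with hc | hc | hc
  · -- k is a cycle minimum
    have hvk1 : 1 ≤ v k := SInf_pos hv1 hk1
    have hlt := hv3 k hk1 hc
    have heq := hv2 k
    have hodd : v k % 2 = 1 := by
      rcases theta_cases (v k) with ⟨h1, h2⟩ | ⟨h1, h2⟩ <;> omega
    rw [beta_A hk1 hc] at hne ⊢
    rcases lt_trichotomy (v k) (2 * (rnk z k : ℤ) - 1) with hlt2 | h | h
    · exfalso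
      obtain ⟨s, hs1, hs2, hs3⟩ :
          ∃ s : ℕ, 1 ≤ s ∧ (v k : ℤ) = 2 * (s : ℤ) - 1 ∧ s < rnk z k :=
        ⟨((v k + 1) / 2).toNat, by omega, by omega, by omega⟩
      obtain ⟨a, q1, q2, q3, q4⟩ := exists_rnk_eq z hk1 hc hs1 (by omega)
      have hak : a < k := by
        rcases eq_or_lt_of_le q3 with rfl | h2
        · omega
        · exact h2
      have hva := hag a (by omega) hak
      rw [beta_A q1 q2, q4] at hva
      have hvv : v a = v k := by omega
      have := v.injective hvv
      omega
    · exact absurd h hne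
    · exact h
  · exact absurd hc.symm (z_fix hz k)
  · -- k is a cycle maximum: forced equality, contradiction
    exfalso
    apply hne
    have hm1 : 1 ≤ z k := z_pos hz hk1
    have hva := hag (z k) (by omega) (by omega)
    have h2 := hv2 (z k)
    rw [z_invol hz] at h2
    rw [h2, hva]
    have h3 := beta_conj hz (z k)
    rw [z_invol hz] at h3
    exact h3.symm

end FpfVisAux
/-- for `z ∈ F_∞`, the FPF-visible inversions of `z` are exactly the
inversions of the lexicographically minimal atom `β_min(z)`. -/
theorem fpfVisInv_eq_inv_minAtom (z : Equiv.Perm ℤ) (hz : z ∈ FInf)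
    (w : Equiv.Perm ℤ) (hw : IsLexMinAtom z w) :
    {p : ℤ × ℤ | FpfVisInv z p.1 p.2} = InvSet w := by
  have hβ := FpfVisAux.beta_AFPF hz
  rcases hw.2 (FpfVisAux.betaPerm hz) hβ with heq | ⟨k, hk, hlt, hag⟩
  · rw [← heq]
    exact (FpfVisAux.invset_beta hz).symm
  · exfalso
    have hw1 := hw.1
    have hconj' := FpfVisAux.conj_iff.mp hw1.2.1
    have hnorm := FpfVisAux.atom_normalized hz hw1
    have hag' : ∀ j : ℤ, 0 < j → j < k → w j = FpfVisAux.betaFun z j :=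
      fun j h1 h2 => hag j h1 h2
    have hlt' : w k < FpfVisAux.betaFun z k := hlt
    have hne : w k ≠ FpfVisAux.betaFun z k := by omega
    have := FpfVisAux.beta_lexlow hz hw1.1 hconj' hnorm hk hag' hne
    omega
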